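/- Let M = (Q, n1, n2, ⇒, q0, qf, I) be a two-counter Minsky machine and let (A, R, Rp, A0, ↪) be its APA encoding. If M halts on (n1, n2), i.e., there exist k, m1', m2' ∈ ℕ with ⇒^k((q0, n1, n2)) = (qf, m1', m2'), then the APA state F(A^I ∪ {σQ(qf), σ1(m1'), σ2(m2')}) is reachable in the APA encoding (i.e., it is obtained from the initial state F(A0) by a finite sequence of transitions), and this reachable state has no outgoing transitions. -/
import Mathlib


/-- A two-counter Minsky machine over a state type `Q`.  An instruction
`(q1, i, q2, u)` has source state `q1 ≠ qf`, counter index `i ∈ {1,2}`,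
target state `q2` and optional alternative target `u : Option Q`
(`none` playing the role of `ε`). -/
structure Minsky (Q : Type*) where
  n1 : ℕ
  n2 : ℕ
  q0 : Q
  qf : Q
  I : Set (Q × ℕ × Q × Option Q)
  I_idx : ∀ x ∈ I, x.2.1 = 1 ∨ x.2.1 = 2
  I_src : ∀ x ∈ I, x.1 ≠ qf
  I_total : ∀ q : Q, q ≠ qf → ∃ i q2 u, (q, i, q2, u) ∈ I

/-- The one-step relation `⇒` of a two-counter Minsky machine. -/
inductive Minsky.Step {Q : Type*} (M : Minsky Q) : Q × ℕ × ℕ → Q × ℕ × ℕ → Prop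
  | inc1 {q1 q2 : Q} {m1 m2 : ℕ} : (q1, 1, q2, (none : Option Q)) ∈ M.I →
      M.Step (q1, m1, m2) (q2, m1 + 1, m2)
  | inc2 {q1 q2 : Q} {m1 m2 : ℕ} : (q1, 2, q2, (none : Option Q)) ∈ M.I →
      M.Step (q1, m1, m2) (q2, m1, m2 + 1)
  | dec1 {q1 q2 q3 : Q} {m1 m2 : ℕ} : (q1, 1, q2, some q3) ∈ M.I → 0 < m1 →
      M.Step (q1, m1, m2) (q3, m1 - 1, m2)
  | dec2 {q1 q2 q3 : Q} {m1 m2 : ℕ} : (q1, 2, q2, some q3) ∈ M.I → 0 < m2 →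
      M.Step (q1, m1, m2) (q3, m1, m2 - 1)
  | zero1 {q1 q2 q3 : Q} {m2 : ℕ} : (q1, 1, q2, some q3) ∈ M.I →
      M.Step (q1, 0, m2) (q2, 0, m2)
  | zero2 {q1 q2 q3 : Q} {m1 : ℕ} : (q1, 2, q2, some q3) ∈ M.I →
      M.Step (q1, m1, 0) (q2, m1, 0)

/-- `M.StepN k c c'` says `⇒^k(c) = c'`, i.e. `c'` is obtained from `c`
by exactly `k` Minsky machine steps. -/
def Minsky.StepN {Q : Type*} (M : Minsky Q) : ℕ → Q × ℕ × ℕ → Q × ℕ × ℕ → Prop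
  | 0, c, c' => c = c'
  | k + 1, c, c' => ∃ c'', M.Step c c'' ∧ M.StepN k c'' c'

/-- An Abstract Persuasion Argumentation framework over the argument type `α`:
an attack relation `R`, a persuasion relation `Rp ⊆ A × (A ∪ {ε}) × A`
(`none` playing the role of `ε`), and an initial set `A0`.
A state `F(A1)` is identified with the set `A1 ⊆ A` of visible arguments
(since the state is `(A1, R ∩ (A1 × A1))`, a function of `A1`). -/
structure APA (α : Type*) where
  R : Set (α × α)
  Rp : Set (α × Option α × α)
  A0 : Set α

namespace APA

variable {α : Type*} (F : APA α)

/-- `a1` attacks `a2` in the state `F(A1)`. -/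
def Attacks (A1 : Set α) (a1 a2 : α) : Prop :=
  a1 ∈ A1 ∧ a2 ∈ A1 ∧ (a1, a2) ∈ F.R

/-- `Γ^{Ax}_{F(A1)}`: members `(a1, α, a2)` of `Rp` with `a1 ∈ A1`,
`α ∈ {ε} ∪ A1`, and `a1` not attacked in `F(A1)` by any member of `Ax`. -/
def gamma (Ax A1 : Set α) : Set (α × Option α × α) :=
  {t | t ∈ F.Rp ∧ t.1 ∈ A1 ∧ (∀ a : α, t.2.1 = some a → a ∈ A1) ∧
    ∀ b ∈ Ax, ¬ F.Attacks A1 b t.1}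

/-- `neg^{A1}(Γ)`. -/
def neg (A1 : Set α) (Γ : Set (α × Option α × α)) : Set α :=
  {ax | ax ∈ A1 ∧ ∃ a1 ∈ A1, ∃ a2 : α, (a1, some ax, a2) ∈ Γ}

/-- `pos^{A1}(Γ)`. -/
def pos (A1 : Set α) (Γ : Set (α × Option α × α)) : Set α :=
  {a2 | ∃ a1 ∈ A1, ∃ m : Option α, (∀ a : α, m = some a → a ∈ A1) ∧ (a1, m, a2) ∈ Γ}

/-- The transition `F(A1) ↪^{Ax} F(A2)` effected by the specific nonempty
`Γ ⊆ Γ^{Ax}_{F(A1)}`. -/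
def TransVia (Ax : Set α) (Γ : Set (α × Option α × α)) (A1 A2 : Set α) : Prop :=
  Γ.Nonempty ∧ Γ ⊆ F.gamma Ax A1 ∧ A2 = (A1 \ neg A1 Γ) ∪ pos A1 Γ

/-- The transition relation `F(A1) ↪^{Ax} F(A2)`. -/
def Trans (Ax A1 A2 : Set α) : Prop :=
  ∃ Γ : Set (α × Option α × α), F.TransVia Ax Γ A1 A2

/-- A state `F(A1)` is reachable iff it is obtained from the initial state
`F(A0)` by a finite sequence of transitions (with arbitrary reference sets). -/
def Reachable (A1 : Set α) : Prop :=
  Relation.ReflTransGen (fun X Y => ∃ Ax : Set α, F.Trans Ax X Y) F.A0 A1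

end APA

/-- `sigC σ1 σ2 i` is `σi` for `i ∈ {1, 2}`. -/
def sigC {α : Type*} (σ1 σ2 : ℕ → α) (i : ℕ) : ℕ → α :=
  if i = 1 then σ1 else σ2

/-- The persuasion relation of the APA encoding of a Minsky machine `M`. -/
def encRp {Q α : Type*} (M : Minsky Q) (σ1 σ2 : ℕ → α) (σQ : Q → α)
    (σI σIc : M.I → α) : Set (α × Option α × α) :=
  {t | (∃ x : M.I, t = (σI x, some (σQ x.val.1), σIc x)) ∨
    (∃ x : M.I, ∃ n : ℕ, x.val.2.2.2 = none ∧
      t = (σIc x, some (sigC σ1 σ2 x.val.2.1 n), sigC σ1 σ2 x.val.2.1 (n + 1))) ∨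
    (∃ x : M.I, ∃ n : ℕ, 1 ≤ n ∧ (∃ q3 : Q, x.val.2.2.2 = some q3) ∧
      t = (σIc x, some (sigC σ1 σ2 x.val.2.1 n), sigC σ1 σ2 x.val.2.1 (n - 1))) ∨
    (∃ x : M.I, ∃ n : ℕ, x.val.2.2.2 = none ∧
      t = (sigC σ1 σ2 x.val.2.1 n, some (σIc x), σQ x.val.2.2.1)) ∨
    (∃ x : M.I, ∃ n : ℕ, 1 ≤ n ∧ ∃ q3 : Q, x.val.2.2.2 = some q3 ∧
      t = (sigC σ1 σ2 x.val.2.1 n, some (σIc x), σQ q3)) ∨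
    (∃ x : M.I, ∃ q3 : Q, x.val.2.2.2 = some q3 ∧
      t = (sigC σ1 σ2 x.val.2.1 0, some (σIc x), σQ x.val.2.2.1))}

/-- The APA encoding of a two-counter Minsky machine `M`, over the argument
type `α` (playing the role of the class `A` of arguments): injective maps
`σ1, σ2, σQ, σI, σIc` with pairwise disjoint ranges covering `α`, an empty
attack relation, the persuasion relation `encRp`, and the initial set
`{σ1 n1, σ2 n2, σQ q0} ∪ A^I`. -/
structure Encoding {Q : Type*} (M : Minsky Q) (α : Type*) extends APA α where
  σ1 : ℕ → α
  σ2 : ℕ → α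
  σQ : Q → α
  σI : M.I → α
  σIc : M.I → α
  inj1 : Function.Injective σ1
  inj2 : Function.Injective σ2
  injQ : Function.Injective σQ
  injI : Function.Injective σI
  injIc : Function.Injective σIc
  disjoint_ranges : List.Pairwise Disjoint
    [Set.range σ1, Set.range σ2, Set.range σQ, Set.range σI, Set.range σIc]
  ranges_cover : Set.range σ1 ∪ Set.range σ2 ∪ Set.range σQ ∪
    Set.range σI ∪ Set.range σIc = Set.univ
  R_empty : toAPA.R = ∅
  Rp_spec : toAPA.Rp = encRp M σ1 σ2 σQ σI σIc
  A0_spec : toAPA.A0 = {σ1 M.n1, σ2 M.n2, σQ M.q0} ∪ Set.range σI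

/-- The set of visible arguments of the APA state `F(A^I ∪ {σQ q, σ1 m1, σ2 m2})`
corresponding to the Minsky machine configuration `(q, m1, m2)`. -/
def encState {Q α : Type*} {M : Minsky Q} (E : Encoding M α)
    (q : Q) (m1 m2 : ℕ) : Set α :=
  Set.range E.σI ∪ {E.σQ q, E.σ1 m1, E.σ2 m2}

/-- The set of visible arguments of the intermediate APA state
`F(A^I ∪ {σIc x, σ1 m1, σ2 m2})`. -/
def encStateC {Q α : Type*} {M : Minsky Q} (E : Encoding M α)
    (x : M.I) (m1 m2 : ℕ) : Set α :=
  Set.range E.σI ∪ {E.σIc x, E.σ1 m1, E.σ2 m2}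

section Aux

variable {Q α : Type*} {M : Minsky Q} (E : Encoding M α)

lemma Encoding.no_attacks (A1 : Set α) (b c : α) : ¬ E.toAPA.Attacks A1 b c := by
  rintro ⟨-, -, h⟩
  rw [E.R_empty] at h
  exact h

lemma Encoding.mem_gamma {Ax A1 : Set α} {t : α × Option α × α}
    (h1 : t ∈ E.toAPA.Rp) (h2 : t.1 ∈ A1) (h3 : ∀ a : α, t.2.1 = some a → a ∈ A1) :
    t ∈ E.toAPA.gamma Ax A1 :=
  ⟨h1, h2, h3, fun b _ => E.no_attacks A1 b t.1⟩

lemma Encoding.disjAll :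
    (∀ a b, E.σ1 a ≠ E.σ2 b) ∧ (∀ a q, E.σ1 a ≠ E.σQ q) ∧ (∀ a x, E.σ1 a ≠ E.σI x) ∧
    (∀ a x, E.σ1 a ≠ E.σIc x) ∧ (∀ a q, E.σ2 a ≠ E.σQ q) ∧ (∀ a x, E.σ2 a ≠ E.σI x) ∧
    (∀ a x, E.σ2 a ≠ E.σIc x) ∧ (∀ q x, E.σQ q ≠ E.σI x) ∧ (∀ q x, E.σQ q ≠ E.σIc x) ∧
    (∀ x y, E.σI x ≠ E.σIc y) := by
  have h := E.disjoint_ranges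
  simp only [List.pairwise_cons, List.mem_cons, List.not_mem_nil, or_false,
    forall_eq_or_imp, forall_eq, List.Pairwise.nil, and_true, List.not_mem_nil,
    IsEmpty.forall_iff] at h
  obtain ⟨⟨h12, h1Q, h1I, h1Ic⟩, ⟨h2Q, h2I, h2Ic⟩, ⟨hQI, hQIc⟩, hIIc, -⟩ := h
  refine ⟨?_, ?_, ?_, ?_, ?_, ?_, ?_, ?_, ?_, ?_⟩ <;>
    intro u v e <;>
    [exact Set.disjoint_left.mp h12 ⟨u, rfl⟩ ⟨v, e.symm⟩;
     exact Set.disjoint_left.mp h1Q ⟨u, rfl⟩ ⟨v, e.symm⟩;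
     exact Set.disjoint_left.mp h1I ⟨u, rfl⟩ ⟨v, e.symm⟩;
     exact Set.disjoint_left.mp h1Ic ⟨u, rfl⟩ ⟨v, e.symm⟩;
     exact Set.disjoint_left.mp h2Q ⟨u, rfl⟩ ⟨v, e.symm⟩;
     exact Set.disjoint_left.mp h2I ⟨u, rfl⟩ ⟨v, e.symm⟩;
     exact Set.disjoint_left.mp h2Ic ⟨u, rfl⟩ ⟨v, e.symm⟩;
     exact Set.disjoint_left.mp hQI ⟨u, rfl⟩ ⟨v, e.symm⟩;
     exact Set.disjoint_left.mp hQIc ⟨u, rfl⟩ ⟨v, e.symm⟩;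
     exact Set.disjoint_left.mp hIIc ⟨u, rfl⟩ ⟨v, e.symm⟩]

lemma APA.neg_singleton {A1 : Set α} {a1 ax a2 : α} (h1 : a1 ∈ A1) (hx : ax ∈ A1) :
    APA.neg A1 {(a1, some ax, a2)} = {ax} := by
  ext y
  simp only [APA.neg, Set.mem_setOf_eq, Set.mem_singleton_iff, Prod.mk.injEq,
    Option.some.injEq]
  constructor
  · rintro ⟨-, b, -, c, rfl, rfl, rfl⟩; rfl
  · rintro rfl; exact ⟨hx, a1, h1, a2, rfl, rfl, rfl⟩

lemma APA.pos_singleton {A1 : Set α} {a1 ax a2 : α} (h1 : a1 ∈ A1) (hx : ax ∈ A1) :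
    APA.pos A1 {(a1, some ax, a2)} = {a2} := by
  ext y
  simp only [APA.pos, Set.mem_setOf_eq, Set.mem_singleton_iff, Prod.mk.injEq]
  constructor
  · rintro ⟨b, -, m, -, rfl, rfl, rfl⟩; rfl
  · rintro rfl
    exact ⟨a1, h1, some ax, fun a ha => by cases ha; exact hx, rfl, rfl, rfl⟩

lemma APA.neg_pair {A1 : Set α} {a b c d : α} (ha : a ∈ A1) (hb : b ∈ A1) :
    APA.neg A1 {(a, some b, c), (b, some a, d)} = {b, a} := by
  ext y
  simp only [APA.neg, Set.mem_setOf_eq, Set.mem_insert_iff, Set.mem_singleton_iff,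
    Prod.mk.injEq, Option.some.injEq]
  constructor
  · rintro ⟨-, e, -, f, (⟨rfl, rfl, rfl⟩ | ⟨rfl, rfl, rfl⟩)⟩
    · exact Or.inl rfl
    · exact Or.inr rfl
  · rintro (rfl | rfl)
    · exact ⟨hb, a, ha, c, Or.inl ⟨rfl, rfl, rfl⟩⟩
    · exact ⟨ha, b, hb, d, Or.inr ⟨rfl, rfl, rfl⟩⟩

lemma APA.pos_pair {A1 : Set α} {a b c d : α} (ha : a ∈ A1) (hb : b ∈ A1) :
    APA.pos A1 {(a, some b, c), (b, some a, d)} = {c, d} := by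
  ext y
  simp only [APA.pos, Set.mem_setOf_eq, Set.mem_insert_iff, Set.mem_singleton_iff,
    Prod.mk.injEq]
  constructor
  · rintro ⟨e, -, m, -, (⟨rfl, rfl, rfl⟩ | ⟨rfl, rfl, rfl⟩)⟩
    · exact Or.inl rfl
    · exact Or.inr rfl
  · rintro (rfl | rfl)
    · exact ⟨a, ha, some b, fun z hz => by cases hz; exact hb, Or.inl ⟨rfl, rfl, rfl⟩⟩
    · exact ⟨b, hb, some a, fun z hz => by cases hz; exact ha, Or.inr ⟨rfl, rfl, rfl⟩⟩

lemma Encoding.trans1 (x : M.I) (m1 m2 : ℕ) :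
    E.toAPA.Trans ∅ (encState E x.val.1 m1 m2) (encStateC E x m1 m2) := by
  obtain ⟨h12, h1Q, h1I, h1Ic, h2Q, h2I, h2Ic, hQI, hQIc, hIIc⟩ := E.disjAll
  have hI : E.σI x ∈ encState E x.val.1 m1 m2 := by
    simp [encState]
  have hQ : E.σQ x.val.1 ∈ encState E x.val.1 m1 m2 := by
    simp [encState]
  refine ⟨{(E.σI x, some (E.σQ x.val.1), E.σIc x)}, Set.singleton_nonempty _, ?_, ?_⟩
  · rw [Set.singleton_subset_iff]
    refine E.mem_gamma ?_ hI ?_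
    · rw [E.Rp_spec]
      exact Or.inl ⟨x, rfl⟩
    · rintro a ha
      injection ha with ha
      subst ha
      exact hQ
  · rw [APA.neg_singleton hI hQ, APA.pos_singleton hI hQ]
    ext y
    simp only [encState, encStateC, Set.mem_union, Set.mem_diff, Set.mem_insert_iff,
      Set.mem_singleton_iff, Set.mem_range]
    constructor
    · rintro (⟨z, rfl⟩ | rfl | rfl | rfl)
      · exact Or.inl ⟨Or.inl ⟨z, rfl⟩, fun e => hQI _ _ e.symm⟩
      · exact Or.inr rfl
      · exact Or.inl ⟨Or.inr (Or.inr (Or.inl rfl)), fun e => h1Q _ _ e⟩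
      · exact Or.inl ⟨Or.inr (Or.inr (Or.inr rfl)), fun e => h2Q _ _ e⟩
    · rintro (⟨(⟨z, rfl⟩ | rfl | rfl | rfl), hne⟩ | rfl)
      · exact Or.inl ⟨z, rfl⟩
      · exact absurd rfl hne
      · exact Or.inr (Or.inr (Or.inl rfl))
      · exact Or.inr (Or.inr (Or.inr rfl))
      · exact Or.inr (Or.inl rfl)
lemma Encoding.seteq1 (x : M.I) (m1 m1' m2 : ℕ) (q' : Q) :
    encState E q' m1' m2 =
      (encStateC E x m1 m2 \ {E.σ1 m1, E.σIc x}) ∪ {E.σ1 m1', E.σQ q'} := by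
  obtain ⟨h12, h1Q, h1I, h1Ic, h2Q, h2I, h2Ic, hQI, hQIc, hIIc⟩ := E.disjAll
  ext y
  simp only [encState, encStateC, Set.mem_union, Set.mem_diff, Set.mem_insert_iff,
    Set.mem_singleton_iff, Set.mem_range, not_or]
  constructor
  · rintro (⟨z, rfl⟩ | rfl | rfl | rfl)
    · exact Or.inl ⟨Or.inl ⟨z, rfl⟩, fun e => h1I _ _ e.symm, fun e => hIIc _ _ e⟩
    · exact Or.inr (Or.inr rfl)
    · exact Or.inr (Or.inl rfl)
    · exact Or.inl ⟨Or.inr (Or.inr (Or.inr rfl)), fun e => h12 _ _ e.symm, fun e => h2Ic _ _ e⟩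
  · rintro (⟨(⟨z, rfl⟩ | rfl | rfl | rfl), hne1, hne2⟩ | rfl | rfl)
    · exact Or.inl ⟨z, rfl⟩
    · exact absurd rfl hne2
    · exact absurd rfl hne1
    · exact Or.inr (Or.inr (Or.inr rfl))
    · exact Or.inr (Or.inr (Or.inl rfl))
    · exact Or.inr (Or.inl rfl)

lemma Encoding.seteq2 (x : M.I) (m1 m2 m2' : ℕ) (q' : Q) :
    encState E q' m1 m2' =
      (encStateC E x m1 m2 \ {E.σ2 m2, E.σIc x}) ∪ {E.σ2 m2', E.σQ q'} := by
  obtain ⟨h12, h1Q, h1I, h1Ic, h2Q, h2I, h2Ic, hQI, hQIc, hIIc⟩ := E.disjAll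
  ext y
  simp only [encState, encStateC, Set.mem_union, Set.mem_diff, Set.mem_insert_iff,
    Set.mem_singleton_iff, Set.mem_range, not_or]
  constructor
  · rintro (⟨z, rfl⟩ | rfl | rfl | rfl)
    · exact Or.inl ⟨Or.inl ⟨z, rfl⟩, fun e => h2I _ _ e.symm, fun e => hIIc _ _ e⟩
    · exact Or.inr (Or.inr rfl)
    · exact Or.inl ⟨Or.inr (Or.inr (Or.inl rfl)), fun e => h12 _ _ e, fun e => h1Ic _ _ e⟩
    · exact Or.inr (Or.inl rfl)
  · rintro (⟨(⟨z, rfl⟩ | rfl | rfl | rfl), hne1, hne2⟩ | rfl | rfl)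
    · exact Or.inl ⟨z, rfl⟩
    · exact absurd rfl hne2
    · exact Or.inr (Or.inr (Or.inl rfl))
    · exact absurd rfl hne1
    · exact Or.inr (Or.inr (Or.inr rfl))
    · exact Or.inr (Or.inl rfl)

lemma Encoding.seteq0 (x : M.I) (m1 m2 : ℕ) (q' : Q) :
    encState E q' m1 m2 = (encStateC E x m1 m2 \ {E.σIc x}) ∪ {E.σQ q'} := by
  obtain ⟨h12, h1Q, h1I, h1Ic, h2Q, h2I, h2Ic, hQI, hQIc, hIIc⟩ := E.disjAll
  ext y
  simp only [encState, encStateC, Set.mem_union, Set.mem_diff, Set.mem_insert_iff,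
    Set.mem_singleton_iff, Set.mem_range]
  constructor
  · rintro (⟨z, rfl⟩ | rfl | rfl | rfl)
    · exact Or.inl ⟨Or.inl ⟨z, rfl⟩, fun e => hIIc _ _ e⟩
    · exact Or.inr rfl
    · exact Or.inl ⟨Or.inr (Or.inr (Or.inl rfl)), fun e => h1Ic _ _ e⟩
    · exact Or.inl ⟨Or.inr (Or.inr (Or.inr rfl)), fun e => h2Ic _ _ e⟩
  · rintro (⟨(⟨z, rfl⟩ | rfl | rfl | rfl), hne⟩ | rfl)
    · exact Or.inl ⟨z, rfl⟩
    · exact absurd rfl hne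
    · exact Or.inr (Or.inr (Or.inl rfl))
    · exact Or.inr (Or.inr (Or.inr rfl))
    · exact Or.inr (Or.inl rfl)

lemma Encoding.trans2_inc1 {q1 q2 : Q} (hx : (q1, 1, q2, (none : Option Q)) ∈ M.I)
    (m1 m2 : ℕ) :
    E.toAPA.Trans ∅ (encStateC E ⟨(q1, 1, q2, none), hx⟩ m1 m2)
      (encState E q2 (m1 + 1) m2) := by
  have hIc : E.σIc ⟨(q1, 1, q2, none), hx⟩ ∈ encStateC E ⟨(q1, 1, q2, none), hx⟩ m1 m2 := by
    simp [encStateC]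
  have h1m : E.σ1 m1 ∈ encStateC E ⟨(q1, 1, q2, none), hx⟩ m1 m2 := by
    simp [encStateC]
  refine ⟨{(E.σIc ⟨(q1, 1, q2, none), hx⟩, some (E.σ1 m1), E.σ1 (m1 + 1)),
      (E.σ1 m1, some (E.σIc ⟨(q1, 1, q2, none), hx⟩), E.σQ q2)},
    ⟨_, Set.mem_insert _ _⟩, ?_, ?_⟩
  · rintro t (rfl | rfl)
    · refine E.mem_gamma ?_ hIc ?_
      · rw [E.Rp_spec]
        exact Or.inr (Or.inl ⟨⟨(q1, 1, q2, none), hx⟩, m1, rfl, by simp [sigC]⟩)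
      · rintro a ha; injection ha with ha; subst ha; exact h1m
    · refine E.mem_gamma ?_ h1m ?_
      · rw [E.Rp_spec]
        exact Or.inr (Or.inr (Or.inr (Or.inl ⟨⟨(q1, 1, q2, none), hx⟩, m1, rfl, by simp [sigC]⟩)))
      · rintro a ha; injection ha with ha; subst ha; exact hIc
  · rw [APA.neg_pair hIc h1m, APA.pos_pair hIc h1m]
    exact E.seteq1 _ m1 (m1 + 1) m2 q2
lemma Encoding.trans2_inc2 {q1 q2 : Q} (hx : (q1, 2, q2, (none : Option Q)) ∈ M.I)
    (m1 m2 : ℕ) :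
    E.toAPA.Trans ∅ (encStateC E ⟨(q1, 2, q2, none), hx⟩ m1 m2)
      (encState E q2 m1 (m2 + 1)) := by
  have hIc : E.σIc ⟨(q1, 2, q2, none), hx⟩ ∈ encStateC E ⟨(q1, 2, q2, none), hx⟩ m1 m2 := by
    simp [encStateC]
  have h2m : E.σ2 m2 ∈ encStateC E ⟨(q1, 2, q2, none), hx⟩ m1 m2 := by
    simp [encStateC]
  refine ⟨{(E.σIc ⟨(q1, 2, q2, none), hx⟩, some (E.σ2 m2), E.σ2 (m2 + 1)),
      (E.σ2 m2, some (E.σIc ⟨(q1, 2, q2, none), hx⟩), E.σQ q2)},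
    ⟨_, Set.mem_insert _ _⟩, ?_, ?_⟩
  · rintro t (rfl | rfl)
    · refine E.mem_gamma ?_ hIc ?_
      · rw [E.Rp_spec]
        exact Or.inr (Or.inl ⟨⟨(q1, 2, q2, none), hx⟩, m2, rfl, by simp [sigC]⟩)
      · rintro a ha; injection ha with ha; subst ha; exact h2m
    · refine E.mem_gamma ?_ h2m ?_
      · rw [E.Rp_spec]
        exact Or.inr (Or.inr (Or.inr (Or.inl ⟨⟨(q1, 2, q2, none), hx⟩, m2, rfl, by simp [sigC]⟩)))
      · rintro a ha; injection ha with ha; subst ha; exact hIc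
  · rw [APA.neg_pair hIc h2m, APA.pos_pair hIc h2m]
    exact E.seteq2 _ m1 m2 (m2 + 1) q2

lemma Encoding.trans2_dec1 {q1 q2 q3 : Q} (hx : (q1, 1, q2, some q3) ∈ M.I)
    (m1 m2 : ℕ) (hm : 0 < m1) :
    E.toAPA.Trans ∅ (encStateC E ⟨(q1, 1, q2, some q3), hx⟩ m1 m2)
      (encState E q3 (m1 - 1) m2) := by
  have hIc : E.σIc ⟨(q1, 1, q2, some q3), hx⟩ ∈
      encStateC E ⟨(q1, 1, q2, some q3), hx⟩ m1 m2 := by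
    simp [encStateC]
  have h1m : E.σ1 m1 ∈ encStateC E ⟨(q1, 1, q2, some q3), hx⟩ m1 m2 := by
    simp [encStateC]
  refine ⟨{(E.σIc ⟨(q1, 1, q2, some q3), hx⟩, some (E.σ1 m1), E.σ1 (m1 - 1)),
      (E.σ1 m1, some (E.σIc ⟨(q1, 1, q2, some q3), hx⟩), E.σQ q3)},
    ⟨_, Set.mem_insert _ _⟩, ?_, ?_⟩
  · rintro t (rfl | rfl)
    · refine E.mem_gamma ?_ hIc ?_
      · rw [E.Rp_spec]
        exact Or.inr (Or.inr (Or.inl ⟨⟨(q1, 1, q2, some q3), hx⟩, m1, hm, ⟨q3, rfl⟩,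
          by simp [sigC]⟩))
      · rintro a ha; injection ha with ha; subst ha; exact h1m
    · refine E.mem_gamma ?_ h1m ?_
      · rw [E.Rp_spec]
        exact Or.inr (Or.inr (Or.inr (Or.inr (Or.inl ⟨⟨(q1, 1, q2, some q3), hx⟩, m1, hm,
          q3, rfl, by simp [sigC]⟩))))
      · rintro a ha; injection ha with ha; subst ha; exact hIc
  · rw [APA.neg_pair hIc h1m, APA.pos_pair hIc h1m]
    exact E.seteq1 _ m1 (m1 - 1) m2 q3

lemma Encoding.trans2_dec2 {q1 q2 q3 : Q} (hx : (q1, 2, q2, some q3) ∈ M.I)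
    (m1 m2 : ℕ) (hm : 0 < m2) :
    E.toAPA.Trans ∅ (encStateC E ⟨(q1, 2, q2, some q3), hx⟩ m1 m2)
      (encState E q3 m1 (m2 - 1)) := by
  have hIc : E.σIc ⟨(q1, 2, q2, some q3), hx⟩ ∈
      encStateC E ⟨(q1, 2, q2, some q3), hx⟩ m1 m2 := by
    simp [encStateC]
  have h2m : E.σ2 m2 ∈ encStateC E ⟨(q1, 2, q2, some q3), hx⟩ m1 m2 := by
    simp [encStateC]
  refine ⟨{(E.σIc ⟨(q1, 2, q2, some q3), hx⟩, some (E.σ2 m2), E.σ2 (m2 - 1)),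
      (E.σ2 m2, some (E.σIc ⟨(q1, 2, q2, some q3), hx⟩), E.σQ q3)},
    ⟨_, Set.mem_insert _ _⟩, ?_, ?_⟩
  · rintro t (rfl | rfl)
    · refine E.mem_gamma ?_ hIc ?_
      · rw [E.Rp_spec]
        exact Or.inr (Or.inr (Or.inl ⟨⟨(q1, 2, q2, some q3), hx⟩, m2, hm, ⟨q3, rfl⟩,
          by simp [sigC]⟩))
      · rintro a ha; injection ha with ha; subst ha; exact h2m
    · refine E.mem_gamma ?_ h2m ?_
      · rw [E.Rp_spec]
        exact Or.inr (Or.inr (Or.inr (Or.inr (Or.inl ⟨⟨(q1, 2, q2, some q3), hx⟩, m2, hm,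
          q3, rfl, by simp [sigC]⟩))))
      · rintro a ha; injection ha with ha; subst ha; exact hIc
  · rw [APA.neg_pair hIc h2m, APA.pos_pair hIc h2m]
    exact E.seteq2 _ m1 m2 (m2 - 1) q3

lemma Encoding.trans2_zero1 {q1 q2 q3 : Q} (hx : (q1, 1, q2, some q3) ∈ M.I)
    (m2 : ℕ) :
    E.toAPA.Trans ∅ (encStateC E ⟨(q1, 1, q2, some q3), hx⟩ 0 m2)
      (encState E q2 0 m2) := by
  have hIc : E.σIc ⟨(q1, 1, q2, some q3), hx⟩ ∈
      encStateC E ⟨(q1, 1, q2, some q3), hx⟩ 0 m2 := by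
    simp [encStateC]
  have h1m : E.σ1 0 ∈ encStateC E ⟨(q1, 1, q2, some q3), hx⟩ 0 m2 := by
    simp [encStateC]
  refine ⟨{(E.σ1 0, some (E.σIc ⟨(q1, 1, q2, some q3), hx⟩), E.σQ q2)},
    Set.singleton_nonempty _, ?_, ?_⟩
  · rw [Set.singleton_subset_iff]
    refine E.mem_gamma ?_ h1m ?_
    · rw [E.Rp_spec]
      exact Or.inr (Or.inr (Or.inr (Or.inr (Or.inr ⟨⟨(q1, 1, q2, some q3), hx⟩, q3, rfl,
        by simp [sigC]⟩))))
    · rintro a ha; injection ha with ha; subst ha; exact hIc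
  · rw [APA.neg_singleton h1m hIc, APA.pos_singleton h1m hIc]
    exact E.seteq0 _ 0 m2 q2

lemma Encoding.trans2_zero2 {q1 q2 q3 : Q} (hx : (q1, 2, q2, some q3) ∈ M.I)
    (m1 : ℕ) :
    E.toAPA.Trans ∅ (encStateC E ⟨(q1, 2, q2, some q3), hx⟩ m1 0)
      (encState E q2 m1 0) := by
  have hIc : E.σIc ⟨(q1, 2, q2, some q3), hx⟩ ∈
      encStateC E ⟨(q1, 2, q2, some q3), hx⟩ m1 0 := by
    simp [encStateC]
  have h2m : E.σ2 0 ∈ encStateC E ⟨(q1, 2, q2, some q3), hx⟩ m1 0 := by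
    simp [encStateC]
  refine ⟨{(E.σ2 0, some (E.σIc ⟨(q1, 2, q2, some q3), hx⟩), E.σQ q2)},
    Set.singleton_nonempty _, ?_, ?_⟩
  · rw [Set.singleton_subset_iff]
    refine E.mem_gamma ?_ h2m ?_
    · rw [E.Rp_spec]
      exact Or.inr (Or.inr (Or.inr (Or.inr (Or.inr ⟨⟨(q1, 2, q2, some q3), hx⟩, q3, rfl,
        by simp [sigC]⟩))))
    · rintro a ha; injection ha with ha; subst ha; exact hIc
  · rw [APA.neg_singleton h2m hIc, APA.pos_singleton h2m hIc]
    exact E.seteq0 _ m1 0 q2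
lemma Encoding.sigIc_not_mem (x : M.I) (q : Q) (m1 m2 : ℕ) :
    E.σIc x ∉ encState E q m1 m2 := by
  obtain ⟨h12, h1Q, h1I, h1Ic, h2Q, h2I, h2Ic, hQI, hQIc, hIIc⟩ := E.disjAll
  intro h
  simp only [encState, Set.mem_union, Set.mem_insert_iff, Set.mem_singleton_iff,
    Set.mem_range] at h
  rcases h with ⟨z, hz⟩ | h | h | h
  · exact hIIc z x hz
  · exact hQIc q x h.symm
  · exact h1Ic m1 x h.symm
  · exact h2Ic m2 x h.symm

lemma Encoding.terminal (m1 m2 : ℕ) (Ax A2 : Set α) :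
    ¬ E.toAPA.Trans Ax (encState E M.qf m1 m2) A2 := by
  obtain ⟨h12, h1Q, h1I, h1Ic, h2Q, h2I, h2Ic, hQI, hQIc, hIIc⟩ := E.disjAll
  rintro ⟨Γ, ⟨t, ht⟩, hsub, -⟩
  obtain ⟨hRp, hmem, hmid, -⟩ := hsub ht
  rw [E.Rp_spec] at hRp
  simp only [encRp, Set.mem_setOf_eq] at hRp
  rcases hRp with ⟨x, rfl⟩ | ⟨x, n, hu, rfl⟩ | ⟨x, n, hn, hu, rfl⟩ | ⟨x, n, hu, rfl⟩ |
    ⟨x, n, hn, q3, hu, rfl⟩ | ⟨x, q3, hu, rfl⟩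
  · have h := hmid _ rfl
    simp only [encState, Set.mem_union, Set.mem_insert_iff, Set.mem_singleton_iff,
      Set.mem_range] at h
    rcases h with ⟨z, hz⟩ | h | h | h
    · exact hQI _ _ hz.symm
    · exact M.I_src x.val x.2 (E.injQ h)
    · exact h1Q _ _ h.symm
    · exact h2Q _ _ h.symm
  · exact E.sigIc_not_mem x _ _ _ hmem
  · exact E.sigIc_not_mem x _ _ _ hmem
  · exact E.sigIc_not_mem x _ _ _ (hmid _ rfl)
  · exact E.sigIc_not_mem x _ _ _ (hmid _ rfl)
  · exact E.sigIc_not_mem x _ _ _ (hmid _ rfl)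

lemma Encoding.step_sim {c c' : Q × ℕ × ℕ} (h : M.Step c c') :
    Relation.ReflTransGen (fun X Y => ∃ Ax : Set α, E.toAPA.Trans Ax X Y)
      (encState E c.1 c.2.1 c.2.2) (encState E c'.1 c'.2.1 c'.2.2) := by
  cases h with
  | inc1 hx =>
      exact Relation.ReflTransGen.head ⟨∅, E.trans1 ⟨_, hx⟩ _ _⟩
        (Relation.ReflTransGen.single ⟨∅, E.trans2_inc1 hx _ _⟩)
  | inc2 hx =>
      exact Relation.ReflTransGen.head ⟨∅, E.trans1 ⟨_, hx⟩ _ _⟩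
        (Relation.ReflTransGen.single ⟨∅, E.trans2_inc2 hx _ _⟩)
  | dec1 hx hm =>
      exact Relation.ReflTransGen.head ⟨∅, E.trans1 ⟨_, hx⟩ _ _⟩
        (Relation.ReflTransGen.single ⟨∅, E.trans2_dec1 hx _ _ hm⟩)
  | dec2 hx hm =>
      exact Relation.ReflTransGen.head ⟨∅, E.trans1 ⟨_, hx⟩ _ _⟩
        (Relation.ReflTransGen.single ⟨∅, E.trans2_dec2 hx _ _ hm⟩)
  | zero1 hx =>
      exact Relation.ReflTransGen.head ⟨∅, E.trans1 ⟨_, hx⟩ _ _⟩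
        (Relation.ReflTransGen.single ⟨∅, E.trans2_zero1 hx _⟩)
  | zero2 hx =>
      exact Relation.ReflTransGen.head ⟨∅, E.trans1 ⟨_, hx⟩ _ _⟩
        (Relation.ReflTransGen.single ⟨∅, E.trans2_zero2 hx _⟩)

lemma Encoding.stepN_sim {k : ℕ} {c c' : Q × ℕ × ℕ} (h : M.StepN k c c') :
    Relation.ReflTransGen (fun X Y => ∃ Ax : Set α, E.toAPA.Trans Ax X Y)
      (encState E c.1 c.2.1 c.2.2) (encState E c'.1 c'.2.1 c'.2.2) := by
  induction k generalizing c with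
  | zero =>
      have hcc : c = c' := h
      rw [hcc]
  | succ k ih =>
      obtain ⟨c'', h1, h2⟩ : ∃ c'', M.Step c c'' ∧ M.StepN k c'' c' := h
      exact (E.step_sim h1).trans (ih h2)

end Aux
/-- if `M` halts on `(n1, n2)`, i.e. `⇒^k((q0, n1, n2)) =
(qf, m1', m2')` for some `k, m1', m2'`, then the APA state
`F(A^I ∪ {σQ qf, σ1 m1', σ2 m2'})` is reachable from the initial state `F(A0)`
and has no outgoing transitions. -/
theorem halting_configuration_reachable_and_terminal {Q α : Type*} [Finite Q]
    (M : Minsky Q) (E : Encoding M α) (k m1' m2' : ℕ)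
    (h : M.StepN k (M.q0, M.n1, M.n2) (M.qf, m1', m2')) :
    E.toAPA.Reachable (encState E M.qf m1' m2') ∧
    ∀ Ax A2 : Set α, ¬ E.toAPA.Trans Ax (encState E M.qf m1' m2') A2 := by
  constructor
  · have hA0 : E.toAPA.A0 = encState E M.q0 M.n1 M.n2 := by
      rw [E.A0_spec]
      ext y
      simp only [encState, Set.mem_union, Set.mem_insert_iff, Set.mem_singleton_iff]
      tauto
    show Relation.ReflTransGen _ E.toAPA.A0 _
    rw [hA0]
    exact E.stepN_sim h
  · intro Ax A2
    exact E.terminal m1' m2' Ax A2
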